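/- Let K ⊂ ℝ be a Cantor set and let I be a bridge of K, i.e., I = B(u) for some endpoint u of a bounded gap of K. Then K ∩ I is a Cantor set and τ(K ∩ I) ≥ τ(K). -/

import Mathlib

open Set

/-- A Cantor set: non-empty, compact, perfect, totally disconnected subset of ℝ. -/
def IsCantorSet (K : Set ℝ) : Prop :=
  K.Nonempty ∧ IsCompact K ∧ Perfect K ∧ IsTotallyDisconnected K

/-- `(a, b)` is a bounded gap of `K`: a bounded connected component of the complement of the
(compact) set `K`, recorded by its endpoints. -/
def IsBoundedGap (K : Set ℝ) (a b : ℝ) : Prop :=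
  a < b ∧ a ∈ K ∧ b ∈ K ∧ Set.Ioo a b ∩ K = ∅

/-- The right endpoint of the bridge at `u`, where `u` is the right endpoint of a bounded gap
of length `ℓ`: the nearest point `a > u` which is either `sSup K` (left endpoint of the
unbounded right gap) or the left endpoint of a gap `(a, b)` with `ℓ ≤ b - a`. -/
noncomputable def rightBridgeEnd (K : Set ℝ) (u ℓ : ℝ) : ℝ :=
  sInf {a : ℝ | u < a ∧ (a = sSup K ∨ ∃ b, IsBoundedGap K a b ∧ ℓ ≤ b - a)}

/-- The left endpoint of the bridge at `u`, where `u` is the left endpoint of a bounded gap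
of length `ℓ`. -/
noncomputable def leftBridgeEnd (K : Set ℝ) (u ℓ : ℝ) : ℝ :=
  sSup {a : ℝ | a < u ∧ (a = sInf K ∨ ∃ b, IsBoundedGap K b a ∧ ℓ ≤ a - b)}

/-- The set of thickness values `|B(u)|/|G|` at endpoints `u` of bounded gaps `G` of `K`. -/
def thicknessValues (K : Set ℝ) : Set ℝ :=
  {r : ℝ | ∃ a b : ℝ, IsBoundedGap K a b ∧
      (r = (rightBridgeEnd K b (b - a) - b) / (b - a) ∨
       r = (a - leftBridgeEnd K a (b - a)) / (b - a))}

/-- The (Newhouse) thickness of `K`. -/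
noncomputable def thickness (K : Set ℝ) : ℝ := sInf (thicknessValues K)

/-! ### Auxiliary lemmas -/

lemma sSup_neg' (s : Set ℝ) : sSup (-s) = -sInf s := by
  rw [Real.sInf_def]; ring

lemma IsBoundedGap.neg {K : Set ℝ} {a b : ℝ} (h : IsBoundedGap K a b) :
    IsBoundedGap (-K) (-b) (-a) := by
  obtain ⟨h1, h2, h3, h4⟩ := h
  refine ⟨by linarith, Set.mem_neg.mpr (by rwa [neg_neg]), Set.mem_neg.mpr (by rwa [neg_neg]), ?_⟩
  rw [Set.eq_empty_iff_forall_notMem]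
  rintro x ⟨⟨hx1, hx2⟩, hxK⟩
  have hmem : -x ∈ Set.Ioo a b ∩ K := ⟨⟨by linarith, by linarith⟩, Set.mem_neg.mp hxK⟩
  rw [h4] at hmem
  exact hmem

lemma rightBridgeEnd_neg (K : Set ℝ) (u ℓ : ℝ) :
    rightBridgeEnd (-K) (-u) ℓ = - leftBridgeEnd K u ℓ := by
  have hset : {x : ℝ | -u < x ∧ (x = sSup (-K) ∨ ∃ d, IsBoundedGap (-K) x d ∧ ℓ ≤ d - x)}
      = -{x : ℝ | x < u ∧ (x = sInf K ∨ ∃ d, IsBoundedGap K d x ∧ ℓ ≤ x - d)} := by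
    ext x
    simp only [Set.mem_neg, mem_setOf_eq]
    constructor
    · rintro ⟨h1, h2⟩
      refine ⟨by linarith, ?_⟩
      rcases h2 with h2 | ⟨d, hd, hld⟩
      · left; rw [sSup_neg'] at h2; linarith
      · right
        have hd' := hd.neg
        rw [neg_neg] at hd'
        exact ⟨-d, hd', by linarith⟩
    · rintro ⟨h1, h2⟩
      refine ⟨by linarith, ?_⟩
      rcases h2 with h2 | ⟨d, hd, hld⟩
      · left; rw [sSup_neg']; linarith
      · right
        have hd' := hd.neg
        rw [neg_neg] at hd'
        exact ⟨-d, hd', by linarith⟩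
  unfold rightBridgeEnd leftBridgeEnd
  rw [hset, Real.sInf_def, neg_neg]

lemma leftBridgeEnd_neg' (K : Set ℝ) (u ℓ : ℝ) :
    leftBridgeEnd (-K) (-u) ℓ = - rightBridgeEnd K u ℓ := by
  have h := rightBridgeEnd_neg (-K) (-u) ℓ
  rw [neg_neg, neg_neg] at h
  linarith

lemma perfect_neg {K : Set ℝ} (h : Perfect K) : Perfect (-K) := by
  constructor
  · exact h.closed.preimage continuous_neg
  · intro x hx
    rw [accPt_iff_nhds]
    intro U hU
    have hU' : Neg.neg ⁻¹' U ∈ nhds (-x) :=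
      ContinuousAt.preimage_mem_nhds continuous_neg.continuousAt (by simpa using hU)
    obtain ⟨y, ⟨hy1, hy2⟩, hyne⟩ :=
      accPt_iff_nhds.mp (h.acc (-x) (Set.mem_neg.mp hx)) _ hU'
    refine ⟨-y, ⟨hy1, Set.mem_neg.mpr (by rwa [neg_neg])⟩, ?_⟩
    intro hc
    exact hyne (by rw [← hc, neg_neg])

lemma cantor_neg {K : Set ℝ} (hK : IsCantorSet K) : IsCantorSet (-K) := by
  obtain ⟨⟨x, hx⟩, hcomp, hperf, htd⟩ := hK
  refine ⟨⟨-x, Set.mem_neg.mpr (by rwa [neg_neg])⟩, hcomp.neg, perfect_neg hperf, ?_⟩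
  intro t ht hpre
  have h1 : Neg.neg '' t ⊆ K := by
    rintro z ⟨w, hw, rfl⟩
    exact Set.mem_neg.mp (ht hw)
  have h2 := htd _ h1 (hpre.image _ continuous_neg.continuousOn)
  intro p hp q hq
  exact neg_injective (h2 (mem_image_of_mem _ hp) (mem_image_of_mem _ hq))

lemma thicknessValues_subset_neg (K : Set ℝ) :
    thicknessValues K ⊆ thicknessValues (-K) := by
  rintro r ⟨u, v, hg, hr⟩
  refine ⟨-v, -u, hg.neg, ?_⟩
  have harg : (-u : ℝ) - (-v) = v - u := by ring
  rw [harg]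
  rcases hr with hr | hr
  · right
    rw [leftBridgeEnd_neg', hr]
    ring
  · left
    rw [rightBridgeEnd_neg, hr]
    ring

lemma thicknessValues_neg (K : Set ℝ) : thicknessValues (-K) = thicknessValues K := by
  apply Set.Subset.antisymm
  · have h := thicknessValues_subset_neg (-K)
    rwa [neg_neg] at h
  · exact thicknessValues_subset_neg K

lemma gap_acc_right {K : Set ℝ} (hperf : Perfect K) {a b : ℝ} (hgap : IsBoundedGap K a b)
    {ε : ℝ} (hε : 0 < ε) : ∃ y ∈ K, b < y ∧ y < b + ε := by
  obtain ⟨hab, haK, hbK, hIoo⟩ := hgap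
  have hε' : 0 < min ε (b - a) := lt_min hε (by linarith)
  obtain ⟨y, ⟨hy1, hy2⟩, hyne⟩ :=
    accPt_iff_nhds.mp (hperf.acc b hbK) (Metric.ball b (min ε (b - a)))
      (Metric.ball_mem_nhds b hε')
  rw [Metric.mem_ball, Real.dist_eq] at hy1
  have habs := abs_lt.mp hy1
  have hm1 : min ε (b - a) ≤ ε := min_le_left _ _
  have hm2 : min ε (b - a) ≤ b - a := min_le_right _ _
  have hay : a < y := by linarith [habs.1]
  have hby : b < y := by
    rcases lt_trichotomy y b with h | h | h
    · exfalso
      have hmem : y ∈ Set.Ioo a b ∩ K := ⟨⟨hay, h⟩, hy2⟩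
      rw [hIoo] at hmem
      exact hmem
    · exact absurd h hyne
    · exact h
  exact ⟨y, hy2, hby, by linarith [habs.2]⟩

lemma gap_acc_left {K : Set ℝ} (hperf : Perfect K) {a b : ℝ} (hgap : IsBoundedGap K a b)
    {ε : ℝ} (hε : 0 < ε) : ∃ y ∈ K, a - ε < y ∧ y < a := by
  obtain ⟨y, hyK, h1, h2⟩ := gap_acc_right (perfect_neg hperf) hgap.neg hε
  exact ⟨-y, Set.mem_neg.mp hyK, by linarith, by linarith⟩

lemma rightBridgeEnd_inter {K : Set ℝ} {b c q ℓ' : ℝ}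
    (hbdd : BddAbove K) (hcK : c ∈ K) (hbq : b ≤ q) (hqc : q < c)
    (hcS : c = sSup K ∨ ∃ d, IsBoundedGap K c d ∧ ℓ' ≤ d - c) :
    rightBridgeEnd (K ∩ Set.Icc b c) q ℓ' = rightBridgeEnd K q ℓ' := by
  set K' := K ∩ Set.Icc b c with hK'
  have hcK' : c ∈ K' := ⟨hcK, Set.mem_Icc.mpr ⟨le_trans hbq hqc.le, le_refl c⟩⟩
  have hsupK' : sSup K' = c :=
    IsGreatest.csSup_eq ⟨hcK', fun y hy => (Set.mem_Icc.mp hy.2).2⟩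
  set A := {x : ℝ | q < x ∧ (x = sSup K' ∨ ∃ d, IsBoundedGap K' x d ∧ ℓ' ≤ d - x)} with hA
  set B := {x : ℝ | q < x ∧ (x = sSup K ∨ ∃ d, IsBoundedGap K x d ∧ ℓ' ≤ d - x)} with hB
  have hcA : c ∈ A := ⟨hqc, Or.inl hsupK'.symm⟩
  have hcB : c ∈ B := ⟨hqc, hcS⟩
  have hAB : A ⊆ B := by
    rintro x ⟨hqx, hx⟩
    refine ⟨hqx, ?_⟩
    rcases hx with hx | ⟨d, ⟨hxd, hxK', hdK', hgapx⟩, hld⟩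
    · rw [hsupK'] at hx
      rw [hx]
      exact hcS
    · right
      refine ⟨d, ⟨hxd, hxK'.1, hdK'.1, ?_⟩, hld⟩
      rw [Set.eq_empty_iff_forall_notMem]
      rintro w ⟨hw, hwK⟩
      have hmem : w ∈ Set.Ioo x d ∩ K' := by
        refine ⟨hw, hwK, Set.mem_Icc.mpr ⟨?_, ?_⟩⟩
        · exact le_trans (Set.mem_Icc.mp hxK'.2).1 hw.1.le
        · exact le_trans hw.2.le (Set.mem_Icc.mp hdK'.2).2
      rw [hgapx] at hmem
      exact hmem
  have hBlow : BddBelow B := ⟨q, fun x hx => hx.1.le⟩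
  have hAlow : BddBelow A := ⟨q, fun x hx => hx.1.le⟩
  have hInfA_le_c : sInf A ≤ c := csInf_le hAlow hcA
  have h1 : sInf B ≤ sInf A := csInf_le_csInf hBlow ⟨c, hcA⟩ hAB
  have h2 : sInf A ≤ sInf B := by
    apply le_csInf ⟨c, hcB⟩
    rintro x ⟨hqx, hx⟩
    rcases le_or_gt c x with hcx | hxc
    · exact le_trans hInfA_le_c hcx
    · rcases hx with hx | ⟨d, ⟨hxd, hxK, hdK, hIoo⟩, hld⟩
      · exfalso
        have hle := le_csSup hbdd hcK
        rw [← hx] at hle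
        linarith
      · have hdc : d ≤ c := by
          by_contra hdc
          push_neg at hdc
          have hmem : c ∈ Set.Ioo x d ∩ K := ⟨⟨hxc, hdc⟩, hcK⟩
          rw [hIoo] at hmem
          exact hmem
        apply csInf_le hAlow
        refine ⟨hqx, Or.inr ⟨d, ⟨hxd, ⟨hxK, Set.mem_Icc.mpr ⟨by linarith, hxc.le⟩⟩,
          ⟨hdK, Set.mem_Icc.mpr ⟨by linarith, hdc⟩⟩, ?_⟩, hld⟩⟩
        rw [Set.eq_empty_iff_forall_notMem]
        rintro w ⟨hw, hwK, _⟩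
        have hmem : w ∈ Set.Ioo x d ∩ K := ⟨hw, hwK⟩
        rw [hIoo] at hmem
        exact hmem
  have e1 : rightBridgeEnd K' q ℓ' = sInf A := rfl
  have e2 : rightBridgeEnd K q ℓ' = sInf B := rfl
  rw [e1, e2]
  exact le_antisymm h2 h1

lemma leftBridgeEnd_inter {K : Set ℝ} {b c p ℓ' : ℝ}
    (hbdd : BddBelow K) (hbK : b ∈ K) (hbp : b < p) (hpc : p ≤ c)
    (hbS : b = sInf K ∨ ∃ d, IsBoundedGap K d b ∧ ℓ' ≤ b - d) :
    leftBridgeEnd (K ∩ Set.Icc b c) p ℓ' = leftBridgeEnd K p ℓ' := by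
  have hKn : BddAbove (-K) := hbdd.neg
  have hbn : (-b) ∈ (-K) := Set.mem_neg.mpr (by rwa [neg_neg])
  have hcS : -b = sSup (-K) ∨ ∃ d, IsBoundedGap (-K) (-b) d ∧ ℓ' ≤ d - (-b) := by
    rcases hbS with h | ⟨d, hg, hl⟩
    · left; rw [sSup_neg']; linarith
    · right; exact ⟨-d, hg.neg, by linarith⟩
  have hmain := rightBridgeEnd_inter (K := -K) (b := -c) (c := -b) (q := -p) (ℓ' := ℓ')
      hKn hbn (by linarith) (by linarith) hcS
  have hset : (-K) ∩ Set.Icc (-c) (-b) = -(K ∩ Set.Icc b c) := by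
    rw [Set.inter_neg, Set.neg_Icc]
  rw [hset] at hmain
  have h1 := rightBridgeEnd_neg (K ∩ Set.Icc b c) p ℓ'
  have h2 := rightBridgeEnd_neg K p ℓ'
  linarith

lemma exists_gap {M : Set ℝ} (hcomp : IsCompact M) (htd : IsTotallyDisconnected M)
    {x y : ℝ} (hx : x ∈ M) (hy : y ∈ M) (hxy : x < y) :
    ∃ p q, IsBoundedGap M p q := by
  have hnotsub : ¬ Set.Icc x y ⊆ M := by
    intro hsub
    have hss := htd (Set.Icc x y) hsub isPreconnected_Icc
    exact hxy.ne (hss (Set.mem_Icc.mpr ⟨le_refl x, hxy.le⟩) (Set.mem_Icc.mpr ⟨hxy.le, le_refl y⟩))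
  obtain ⟨z, hz1, hz2⟩ := Set.not_subset.mp hnotsub
  rw [Set.mem_Icc] at hz1
  have hzx : x < z := lt_of_le_of_ne hz1.1 (by rintro rfl; exact hz2 hx)
  have hzy : z < y := lt_of_le_of_ne hz1.2 (by rintro rfl; exact hz2 hy)
  have hPc : IsCompact (M ∩ Set.Icc x z) := hcomp.inter_right isClosed_Icc
  have hQc : IsCompact (M ∩ Set.Icc z y) := hcomp.inter_right isClosed_Icc
  have hPne : (M ∩ Set.Icc x z).Nonempty := ⟨x, hx, Set.mem_Icc.mpr ⟨le_refl x, hzx.le⟩⟩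
  have hQne : (M ∩ Set.Icc z y).Nonempty := ⟨y, hy, Set.mem_Icc.mpr ⟨hzy.le, le_refl y⟩⟩
  have hp := hPc.sSup_mem hPne
  have hq := hQc.sInf_mem hQne
  set p := sSup (M ∩ Set.Icc x z) with hpdef
  set q := sInf (M ∩ Set.Icc z y) with hqdef
  have hpz : p < z := lt_of_le_of_ne (Set.mem_Icc.mp hp.2).2 (fun h => hz2 (h ▸ hp.1))
  have hzq : z < q := lt_of_le_of_ne (Set.mem_Icc.mp hq.2).1
    (fun h => hz2 (by rw [h]; exact hq.1))
  refine ⟨p, q, lt_trans hpz hzq, hp.1, hq.1, ?_⟩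
  rw [Set.eq_empty_iff_forall_notMem]
  rintro w ⟨⟨hw1, hw2⟩, hwM⟩
  rcases le_or_gt w z with h | h
  · have hmem : w ∈ M ∩ Set.Icc x z :=
      ⟨hwM, Set.mem_Icc.mpr ⟨le_trans (Set.mem_Icc.mp hp.2).1 hw1.le, h⟩⟩
    exact absurd (le_csSup hPc.bddAbove hmem) (not_le.mpr hw1)
  · have hmem : w ∈ M ∩ Set.Icc z y :=
      ⟨hwM, Set.mem_Icc.mpr ⟨h.le, le_trans hw2.le (Set.mem_Icc.mp hq.2).2⟩⟩
    exact absurd (csInf_le hQc.bddBelow hmem) (not_le.mpr hw2)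

lemma thicknessValues_nonneg {K : Set ℝ} (hK : IsCantorSet K) :
    ∀ r ∈ thicknessValues K, 0 ≤ r := by
  obtain ⟨hne, hcomp, hperf, htd⟩ := hK
  rintro r ⟨a, b, hgap, hr | hr⟩
  · have hl : 0 < b - a := by linarith [hgap.1]
    have hbE : b ≤ rightBridgeEnd K b (b - a) := by
      obtain ⟨y, hyK, hby, _⟩ := gap_acc_right hperf hgap one_pos
      have hS : sSup K ∈ {x : ℝ | b < x ∧ (x = sSup K ∨
          ∃ d, IsBoundedGap K x d ∧ (b - a) ≤ d - x)} :=
        ⟨lt_of_lt_of_le hby (le_csSup hcomp.bddAbove hyK), Or.inl rfl⟩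
      exact le_csInf ⟨_, hS⟩ (fun x hx => hx.1.le)
    rw [hr]
    exact div_nonneg (by linarith) hl.le
  · have hl : 0 < b - a := by linarith [hgap.1]
    have haE : leftBridgeEnd K a (b - a) ≤ a := by
      obtain ⟨y, hyK, _, hya⟩ := gap_acc_left hperf hgap one_pos
      have hT : sInf K ∈ {x : ℝ | x < a ∧ (x = sInf K ∨
          ∃ d, IsBoundedGap K d x ∧ (b - a) ≤ x - d)} :=
        ⟨lt_of_le_of_lt (csInf_le hcomp.bddBelow hyK) hya, Or.inl rfl⟩
      exact csSup_le ⟨_, hT⟩ (fun x hx => hx.1.le)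
    rw [hr]
    exact div_nonneg (by linarith) hl.le

lemma main_right {K : Set ℝ} (hK : IsCantorSet K) {a b : ℝ} (hgap : IsBoundedGap K a b) :
    IsCantorSet (K ∩ Set.Icc b (rightBridgeEnd K b (b - a))) ∧
      thickness (K ∩ Set.Icc b (rightBridgeEnd K b (b - a))) ≥ thickness K := by
  obtain ⟨hne, hcomp, hperf, htd⟩ := hK
  obtain ⟨hab, haK, hbK, hIoo⟩ := hgap
  have hgap' : IsBoundedGap K a b := ⟨hab, haK, hbK, hIoo⟩
  have hK' : IsCantorSet K := ⟨hne, hcomp, hperf, htd⟩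
  set ℓ := b - a with hl
  have hl0 : 0 < ℓ := by rw [hl]; linarith
  set S := {x : ℝ | b < x ∧ (x = sSup K ∨ ∃ d, IsBoundedGap K x d ∧ ℓ ≤ d - x)} with hS
  have hSlow : BddBelow S := ⟨b, fun x hx => hx.1.le⟩
  have hsupKb : b < sSup K := by
    obtain ⟨y, hyK, hby, _⟩ := gap_acc_right hperf hgap' one_pos
    exact lt_of_lt_of_le hby (le_csSup hcomp.bddAbove hyK)
  have hsupS : sSup K ∈ S := ⟨hsupKb, Or.inl rfl⟩
  have hSne : S.Nonempty := ⟨_, hsupS⟩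
  have hsep : ∀ x ∈ S, ∀ y ∈ S, x < y → x + ℓ ≤ y := by
    rintro x ⟨hbx, hx⟩ y ⟨hby, hy⟩ hxy
    rcases hx with rfl | ⟨d, ⟨hxd, hxK, hdK, hIood⟩, hld⟩
    · exfalso
      rcases hy with rfl | ⟨e, ⟨hye, hyK, _, _⟩, _⟩
      · exact lt_irrefl _ hxy
      · exact absurd (le_csSup hcomp.bddAbove hyK) (not_le.mpr hxy)
    · have hyd : d ≤ y := by
        rcases hy with rfl | ⟨e, ⟨hye, hyK, _, _⟩, _⟩
        · exact le_csSup hcomp.bddAbove hdK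
        · by_contra h
          push_neg at h
          have hmem : y ∈ Set.Ioo x d ∩ K := ⟨⟨hxy, h⟩, hyK⟩
          rw [hIood] at hmem
          exact hmem
      linarith
  set c := sInf S with hc
  have hcmem : c ∈ S := by
    obtain ⟨x, hxS, hxlt⟩ : ∃ x ∈ S, x < c + ℓ := by
      by_contra h
      push_neg at h
      have hcl : c + ℓ ≤ c := le_csInf hSne h
      linarith
    have hxlb : ∀ y ∈ S, x ≤ y := by
      intro y hyS
      rcases lt_trichotomy y x with h | h | h
      · exfalso
        have h1 := hsep y hyS x hxS h
        have h2 := csInf_le hSlow hyS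
        linarith
      · exact h.ge
      · exact h.le
    have hxc : x = c := le_antisymm (le_csInf hSne hxlb) (csInf_le hSlow hxS)
    rwa [hxc] at hxS
  have hbc : b < c := hcmem.1
  have hcK : c ∈ K := by
    rcases hcmem.2 with hcsup | ⟨d, hd, _⟩
    · rw [hcsup]; exact hcomp.sSup_mem hne
    · exact hd.2.1
  have hcEq : rightBridgeEnd K b ℓ = c := rfl
  rw [hcEq]
  set K2 := K ∩ Set.Icc b c with hK2
  have hK2comp : IsCompact K2 := hcomp.inter_right isClosed_Icc
  have hbK2 : b ∈ K2 := ⟨hbK, Set.mem_Icc.mpr ⟨le_refl b, hbc.le⟩⟩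
  have hcK2 : c ∈ K2 := ⟨hcK, Set.mem_Icc.mpr ⟨hbc.le, le_refl c⟩⟩
  have hK2ne : K2.Nonempty := ⟨b, hbK2⟩
  have hK2td : IsTotallyDisconnected K2 :=
    fun t ht hpc => htd t (ht.trans Set.inter_subset_left) hpc
  have hKnear : ∀ x ∈ K, ∀ ε : ℝ, 0 < ε → ∃ y ∈ K, y ≠ x ∧ |y - x| < ε := by
    intro x hx ε hε
    obtain ⟨y, ⟨hy1, hy2⟩, hyne⟩ := accPt_iff_nhds.mp (hperf.acc x hx)
      (Metric.ball x ε) (Metric.ball_mem_nhds x hε)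
    rw [Metric.mem_ball, Real.dist_eq] at hy1
    exact ⟨y, hy2, hyne, hy1⟩
  have hnear : ∀ x ∈ K2, ∀ ε : ℝ, 0 < ε → ∃ y ∈ K2, y ≠ x ∧ |y - x| < ε := by
    rintro x ⟨hxK, hxI⟩ ε hε
    rw [Set.mem_Icc] at hxI
    rcases eq_or_lt_of_le hxI.1 with hxb | hbx
    · -- x = b
      have hε' : 0 < min ε (c - b) := lt_min hε (by linarith)
      obtain ⟨y, hyK, h1, h2⟩ := gap_acc_right hperf hgap' hε'
      have hm1 : min ε (c - b) ≤ ε := min_le_left _ _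
      have hm2 : min ε (c - b) ≤ c - b := min_le_right _ _
      refine ⟨y, ⟨hyK, Set.mem_Icc.mpr ⟨h1.le, by linarith⟩⟩, by rw [← hxb]; exact h1.ne',
        ?_⟩
      rw [← hxb]
      rw [abs_lt]
      constructor <;> linarith
    · rcases eq_or_lt_of_le hxI.2 with hxc | hxc
      · -- x = c
        have hε' : 0 < min ε (c - b) := lt_min hε (by linarith)
        have hm1 : min ε (c - b) ≤ ε := min_le_left _ _
        have hm2 : min ε (c - b) ≤ c - b := min_le_right _ _
        rcases hcmem.2 with hcsup | ⟨d, hgapd, hld⟩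
        · obtain ⟨y, hyK, hyne, hyd⟩ := hKnear c hcK _ hε'
          have hyc : y < c :=
            lt_of_le_of_ne (by rw [hcsup]; exact le_csSup hcomp.bddAbove hyK) hyne
          have habs := abs_lt.mp hyd
          refine ⟨y, ⟨hyK, Set.mem_Icc.mpr ⟨by linarith, hyc.le⟩⟩,
            by rw [hxc]; exact hyc.ne, ?_⟩
          rw [hxc, abs_lt]
          constructor <;> linarith
        · obtain ⟨y, hyK, h1, h2⟩ := gap_acc_left hperf hgapd hε'
          refine ⟨y, ⟨hyK, Set.mem_Icc.mpr ⟨by linarith, h2.le⟩⟩,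
            by rw [hxc]; exact h2.ne, ?_⟩
          rw [hxc, abs_lt]
          constructor <;> linarith
      · -- b < x < c
        have hε' : 0 < min ε (min (x - b) (c - x)) :=
          lt_min hε (lt_min (by linarith) (by linarith))
        obtain ⟨y, hyK, hyne, hyd⟩ := hKnear x hxK _ hε'
        have hm1 : min ε (min (x - b) (c - x)) ≤ ε := min_le_left _ _
        have hm2 : min ε (min (x - b) (c - x)) ≤ x - b :=
          le_trans (min_le_right _ _) (min_le_left _ _)
        have hm3 : min ε (min (x - b) (c - x)) ≤ c - x :=
          le_trans (min_le_right _ _) (min_le_right _ _)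
        have habs := abs_lt.mp hyd
        refine ⟨y, ⟨hyK, Set.mem_Icc.mpr ⟨by linarith, by linarith⟩⟩, hyne, by
          rw [abs_lt]; constructor <;> linarith⟩
  have hK2perf : Perfect K2 := by
    constructor
    · exact hK2comp.isClosed
    · intro x hx
      rw [accPt_iff_nhds]
      intro U hU
      obtain ⟨ε, hε, hball⟩ := Metric.mem_nhds_iff.mp hU
      obtain ⟨y, hyK2, hyne, hyd⟩ := hnear x hx ε hε
      exact ⟨y, ⟨hball (by rwa [Metric.mem_ball, Real.dist_eq]), hyK2⟩, hyne⟩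
  have hsub : thicknessValues K2 ⊆ thicknessValues K := by
    rintro r ⟨p, q, ⟨hpq, hpK2, hqK2, hIoopq⟩, hr⟩
    obtain ⟨hpK, hpI⟩ := hpK2
    obtain ⟨hqK, hqI⟩ := hqK2
    rw [Set.mem_Icc] at hpI hqI
    have hbp : b < p := by
      rcases eq_or_lt_of_le hpI.1 with h | h
      · exfalso
        have hqb : (0:ℝ) < q - b := by linarith [hpq]
        obtain ⟨y, hyK, h1, h2⟩ := gap_acc_right hperf hgap' hqb
        have hmem : y ∈ Set.Ioo p q ∩ K2 := by
          refine ⟨⟨by linarith, by linarith⟩, hyK, Set.mem_Icc.mpr ⟨h1.le, ?_⟩⟩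
          linarith [hqI.2]
        rw [hIoopq] at hmem
        exact hmem
      · exact h
    have hqc : q < c := by
      rcases eq_or_lt_of_le hqI.2 with h | h
      · exfalso
        have hpc : p < c := by rw [← h]; exact hpq
        have hεpos : (0:ℝ) < c - p := by linarith
        rcases hcmem.2 with hcsup | ⟨d, hgapd, hld⟩
        · obtain ⟨y, hyK, hyne, hyd⟩ := hKnear c hcK _ hεpos
          have hyc : y < c :=
            lt_of_le_of_ne (by rw [hcsup]; exact le_csSup hcomp.bddAbove hyK) hyne
          have habs := abs_lt.mp hyd
          have hmem : y ∈ Set.Ioo p q ∩ K2 :=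
            ⟨⟨by linarith, by rw [h]; exact hyc⟩, hyK,
              Set.mem_Icc.mpr ⟨by linarith, hyc.le⟩⟩
          rw [hIoopq] at hmem
          exact hmem
        · obtain ⟨y, hyK, h1, h2⟩ := gap_acc_left hperf hgapd hεpos
          have hmem : y ∈ Set.Ioo p q ∩ K2 :=
            ⟨⟨by linarith, by rw [h]; exact h2⟩, hyK,
              Set.mem_Icc.mpr ⟨by linarith, h2.le⟩⟩
          rw [hIoopq] at hmem
          exact hmem
      · exact h
    have hgapK : IsBoundedGap K p q := by
      refine ⟨hpq, hpK, hqK, ?_⟩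
      rw [Set.eq_empty_iff_forall_notMem]
      rintro w ⟨hw, hwK⟩
      have hmem : w ∈ Set.Ioo p q ∩ K2 :=
        ⟨hw, hwK, Set.mem_Icc.mpr ⟨by linarith [hw.1], by linarith [hw.2]⟩⟩
      rw [hIoopq] at hmem
      exact hmem
    have hl' : q - p ≤ ℓ := by
      by_contra hcon
      push_neg at hcon
      have hpS : p ∈ S := ⟨hbp, Or.inr ⟨q, hgapK, hcon.le⟩⟩
      have hcp := csInf_le hSlow hpS
      linarith
    have hcS2 : c = sSup K ∨ ∃ d, IsBoundedGap K c d ∧ (q - p) ≤ d - c := by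
      rcases hcmem.2 with hcsup | ⟨d, hgapd, hld⟩
      · exact Or.inl hcsup
      · exact Or.inr ⟨d, hgapd, by linarith⟩
    have hre : rightBridgeEnd K2 q (q - p) = rightBridgeEnd K q (q - p) :=
      rightBridgeEnd_inter hcomp.bddAbove hcK (le_trans hbp.le hpq.le) hqc hcS2
    have hbS2 : b = sInf K ∨ ∃ d, IsBoundedGap K d b ∧ (q - p) ≤ b - d :=
      Or.inr ⟨a, hgap', by rw [hl] at hl'; linarith⟩
    have hle : leftBridgeEnd K2 p (q - p) = leftBridgeEnd K p (q - p) :=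
      leftBridgeEnd_inter hcomp.bddBelow hbK hbp hpI.2 hbS2
    refine ⟨p, q, hgapK, ?_⟩
    rcases hr with hr | hr
    · left; rw [hr, hre]
    · right; rw [hr, hle]
  have hvne : (thicknessValues K2).Nonempty := by
    obtain ⟨p, q, hg⟩ := exists_gap hK2comp hK2td hbK2 hcK2 hbc
    exact ⟨_, p, q, hg, Or.inl rfl⟩
  refine ⟨⟨hK2ne, hK2comp, hK2perf, hK2td⟩, ?_⟩
  exact csInf_le_csInf ⟨0, fun r hr => thicknessValues_nonneg hK' r hr⟩ hvne hsub

/-- **Observation.** If `I` is a bridge of a Cantor set `K`, i.e. `I = B(u)` for an endpoint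
`u` of a bounded gap of `K` (the bridge `[b, B(b)]` at the right endpoint `b`, or `[B(a), a]`
at the left endpoint `a`, of a bounded gap `(a, b)`), then `K ∩ I` is a Cantor set and
`τ(K ∩ I) ≥ τ(K)`. -/
theorem bridge_restriction_thickness (K : Set ℝ) (hK : IsCantorSet K)
    (a b : ℝ) (hgap : IsBoundedGap K a b) :
    (IsCantorSet (K ∩ Set.Icc b (rightBridgeEnd K b (b - a))) ∧
      thickness (K ∩ Set.Icc b (rightBridgeEnd K b (b - a))) ≥ thickness K) ∧
    (IsCantorSet (K ∩ Set.Icc (leftBridgeEnd K a (b - a)) a) ∧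
      thickness (K ∩ Set.Icc (leftBridgeEnd K a (b - a)) a) ≥ thickness K) := by
  constructor
  · exact main_right hK hgap
  · have hKn : IsCantorSet (-K) := cantor_neg hK
    have hgn : IsBoundedGap (-K) (-b) (-a) := hgap.neg
    have hmr := main_right hKn hgn
    have harg : (-a : ℝ) - (-b) = b - a := by ring
    rw [harg] at hmr
    rw [rightBridgeEnd_neg K a (b - a)] at hmr
    have hset : (-K) ∩ Set.Icc (-a) (-(leftBridgeEnd K a (b - a)))
        = -(K ∩ Set.Icc (leftBridgeEnd K a (b - a)) a) := by
      rw [Set.inter_neg, Set.neg_Icc]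
    rw [hset] at hmr
    obtain ⟨hc1, hc2⟩ := hmr
    constructor
    · have hcc := cantor_neg hc1
      rwa [neg_neg] at hcc
    · have h1 : thickness (-(K ∩ Set.Icc (leftBridgeEnd K a (b - a)) a))
          = thickness (K ∩ Set.Icc (leftBridgeEnd K a (b - a)) a) := by
        unfold thickness
        rw [thicknessValues_neg]
      have h2 : thickness (-K) = thickness K := by
        unfold thickness
        rw [thicknessValues_neg]
      rw [h1, h2] at hc2
      exact hc2
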